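/- Let F be a properly parametrized Markov multi-map with associated SFT Σ_M. Suppose that for every a∈A₀ the graph G(a) of f_a is a straight line segment. If there exists a∈A₀ with R₀(a)∩P≠∅, and there exists an irreducible component of A containing A₀, then Σ_M satisfies the Coding Condition (CC). -/

import Mathlib

open Set Topology

/-! ### Generic dynamical notions -/

/-- Topological transitivity of a map. -/
def TopTransitive {α : Type*} [TopologicalSpace α] (T : α → α) : Prop :=
  ∀ U V : Set α, IsOpen U → IsOpen V → U.Nonempty → V.Nonempty →
    ∃ n : ℕ, (T^[n] '' U ∩ V).Nonempty

/-- Topological mixing of a map. -/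
def TopMixing {α : Type*} [TopologicalSpace α] (T : α → α) : Prop :=
  ∀ U V : Set α, IsOpen U → IsOpen V → U.Nonempty → V.Nonempty →
    ∃ N : ℕ, ∀ n, N ≤ n → (T^[n] '' U ∩ V).Nonempty

/-- Density of the set of periodic points of a map. -/
def DensePeriodic {α : Type*} [TopologicalSpace α] (T : α → α) : Prop :=
  Dense {x : α | ∃ p : ℕ, 1 ≤ p ∧ T^[p] x = x}

/-- The metric `d(x,y) = sup_k |x_k - y_k|/(k+1)` on sequence spaces. -/
noncomputable def dseq (x y : ℕ → ℝ) : ℝ := ⨆ k : ℕ, |x k - y k| / ((k : ℝ) + 1)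

/-- The specification property for a map `T` with respect to a distance function `d`. -/
def SpecProp {α : Type*} (T : α → α) (d : α → α → ℝ) : Prop :=
  ∀ ε : ℝ, 0 < ε → ∃ N : ℕ, ∀ l : ℕ, ∀ x : Fin (l + 1) → α, ∀ a b : Fin (l + 1) → ℕ,
    (∀ k, 1 ≤ a k) → (∀ k, a k ≤ b k) →
    (∀ k : Fin l, b k.castSucc < a k.succ ∧ b k.castSucc + N ≤ a k.succ) →
    ∀ p : ℕ, b (Fin.last l) + N ≤ p →
      ∃ z : α, T^[p] z = z ∧
        ∀ k : Fin (l + 1), ∀ i : ℕ, a k ≤ i → i ≤ b k → d (T^[i] z) (T^[i] (x k)) < ε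

/-- The length `ℓ` of a (possibly degenerate) interval. -/
noncomputable def intervalLen (I : Set ℝ) : ℝ := sSup I - sInf I

/-! ### Markov multi-maps -/

/-- A Markov multi-map of the interval, given by a tuple
`(P, A₀, A₁, A₂, D, R, {f_a})` as in the paper, together with the derived data
(inverse maps `g`, interiors `D0`, `R0`, graphs `Gr`, `G0`) which are uniquely
determined by the defining equations below. -/
structure MarkovMultiMap where
  A : Type
  finA : Finite A
  A0 : Set A
  A1 : Set A
  A2 : Set A
  P : Finset ℝ
  D : A → Set ℝ
  R : A → Set ℝ
  f : A → ℝ → ℝ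
  g : A → ℝ → ℝ
  D0 : A → Set ℝ
  R0 : A → Set ℝ
  Gr : A → Set (ℝ × ℝ)
  G0 : A → Set (ℝ × ℝ)
  P_zero : (0 : ℝ) ∈ P
  P_one : (1 : ℝ) ∈ P
  P_sub : (P : Set ℝ) ⊆ Set.Icc 0 1
  A_cover : ∀ a : A, a ∈ A0 ∨ a ∈ A1 ∨ a ∈ A2
  A01 : A0 ∩ A1 = ∅
  A02 : A0 ∩ A2 = ∅
  A12 : A1 ∩ A2 = ∅
  D_A0 : ∀ a ∈ A0, ∃ p ∈ P, ∃ q ∈ P, p < q ∧ (∀ r ∈ P, ¬(p < r ∧ r < q)) ∧ D a = Set.Icc p q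
  D_A12 : ∀ a ∈ A1 ∪ A2, ∃ p ∈ P, D a = {p}
  R_A0 : ∀ a ∈ A0, ∃ u ∈ P, ∃ v ∈ P, u < v ∧ R a = Set.Icc u v
  R_A1 : ∀ a ∈ A1, ∃ u ∈ P, ∃ v ∈ P, u < v ∧ R a = Set.Icc u v ∧
    Set.Icc u v ∩ (P : Set ℝ) = {u, v}
  R_A2 : ∀ a ∈ A2, ∃ u ∈ P, R a = {u}
  f_homeo : ∀ a ∈ A0, ContinuousOn (f a) (D a) ∧ Set.BijOn (f a) (D a) (R a)
  g_A0 : ∀ a ∈ A0, (∀ x ∈ D a, g a (f a x) = x) ∧ ∀ y ∈ R a, g a y ∈ D a ∧ f a (g a y) = y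
  g_A12 : ∀ a ∈ A1 ∪ A2, ∀ y ∈ R a, g a y ∈ D a
  cover : Set.Icc (0 : ℝ) 1 = ⋃ a : A, D a
  D0_A0 : ∀ a ∈ A0, D0 a = interior (D a)
  D0_A12 : ∀ a ∈ A1 ∪ A2, D0 a = D a
  R0_A01 : ∀ a ∈ A0 ∪ A1, R0 a = interior (R a)
  R0_A2 : ∀ a ∈ A2, R0 a = R a
  Gr_A0 : ∀ a ∈ A0, Gr a = {q : ℝ × ℝ | q.1 ∈ D a ∧ q.2 = f a q.1}
  Gr_A12 : ∀ a ∈ A1 ∪ A2, Gr a = (D a) ×ˢ (R a)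
  G0_A0 : ∀ a ∈ A0, G0 a = {q : ℝ × ℝ | q.1 ∈ D0 a ∧ q.2 = f a q.1}
  G0_A1 : ∀ a ∈ A1, G0 a = (D a) ×ˢ (R0 a)
  G0_A2 : ∀ a ∈ A2, G0 a = Gr a

namespace MarkovMultiMap

variable (M : MarkovMultiMap)

/-- The graph `G(F)` of the multi-map. -/
def GF : Set (ℝ × ℝ) := ⋃ a : M.A, M.Gr a

/-- `F` is properly parametrized: the sets `G₀(a)` partition `G(F)`. -/
def ProperlyParametrized : Prop :=
  (⋃ a : M.A, M.G0 a) = M.GF ∧ ∀ a b : M.A, a ≠ b → Disjoint (M.G0 a) (M.G0 b)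

/-- The forward trajectory space `X`. -/
def X : Set (ℕ → ℝ) :=
  {x | (∀ k, x k ∈ Set.Icc (0 : ℝ) 1) ∧ ∀ k, (x k, x (k + 1)) ∈ M.GF}

/-- The left-shift map `T` on the forward trajectory space. -/
def shift : M.X → M.X :=
  fun x => ⟨fun k => x.1 (k + 1), ⟨fun k => x.2.1 (k + 1), fun k => x.2.2 (k + 1)⟩⟩

/-- The inverse trajectory (inverse limit) space `Y`, encoded by `y k = y_{-k}`. -/
def Y : Set (ℕ → ℝ) :=
  {y | (∀ k, y k ∈ Set.Icc (0 : ℝ) 1) ∧ ∀ k, (y (k + 1), y k) ∈ M.GF}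

/-- The right-shift map `S` on the inverse limit space (in the encoding `y k = y_{-k}`). -/
def ishift : M.Y → M.Y :=
  fun y => ⟨fun k => y.1 (k + 1), ⟨fun k => y.2.1 (k + 1), fun k => y.2.2 (k + 1)⟩⟩

/-- The space `X_n` of finite trajectories of length `n`. -/
def finTraj (n : ℕ) : Set (Fin n → ℝ) :=
  {x | (∀ i, x i ∈ Set.Icc (0 : ℝ) 1) ∧
    ∀ i : Fin n, ∀ h : (i : ℕ) + 1 < n, (x i, x ⟨(i : ℕ) + 1, h⟩) ∈ M.GF}

/-- The associated nearest-neighbor SFT `Σ_M`. -/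
def SFT : Set (ℕ → M.A) := {a | ∀ n : ℕ, M.D0 (a (n + 1)) ⊆ M.R0 (a n)}

/-- The word `u` (of length `n`) occurs in some point of `Z`. -/
def WordIn {n : ℕ} (u : Fin n → M.A) (Z : Set (ℕ → M.A)) : Prop :=
  ∃ z ∈ Z, ∃ m : ℕ, ∀ i : Fin n, u i = z (m + (i : ℕ))

/-- `L_n`, the words of length `n` in the language of `Σ_M`. -/
def Lang (n : ℕ) : Set (Fin n → M.A) := {u | M.WordIn u M.SFT}

/-- `(x,u)` is a labeled finite trajectory: `(x_k, x_{k+1}) ∈ G(u_k)` for all `k`. -/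
def Labeled {n : ℕ} (x : Fin (n + 1) → ℝ) (u : Fin n → M.A) : Prop :=
  ∀ i : Fin n, (x i.castSucc, x i.succ) ∈ M.Gr (u i)

/-- `(x,u)` is a special labeled finite trajectory: `(x_k, x_{k+1}) ∈ G₀(u_k)` for all `k`. -/
def SpecialLabeled {n : ℕ} (x : Fin (n + 1) → ℝ) (u : Fin n → M.A) : Prop :=
  ∀ i : Fin n, (x i.castSucc, x i.succ) ∈ M.G0 (u i)

/-- A word `u ∈ L_n` is essential if the set of finite trajectories specially labeled
by `u` is open in `X_{n+1}`. -/
def EssentialWord {n : ℕ} (u : Fin n → M.A) : Prop :=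
  u ∈ M.Lang n ∧ IsOpen {x : M.finTraj (n + 1) | M.SpecialLabeled x.1 u}

/-- A symbol is essential if it appears in some essential word. -/
def EssentialSymbol (a : M.A) : Prop :=
  ∃ n : ℕ, ∃ u : Fin n → M.A, M.EssentialWord u ∧ ∃ i : Fin n, u i = a

/-- `A^(e)`, the set of essential symbols. -/
def Ess : Set M.A := {a | M.EssentialSymbol a}

/-- `E`, the set of essential symbolic sequences. -/
def E : Set (ℕ → M.A) := {z ∈ M.SFT | ∀ i : ℕ, z i ∈ M.Ess}

/-- A word all of whose letters lie in `C`, in the language of `Σ_M`. -/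
def WordOver {n : ℕ} (u : Fin n → M.A) (C : Set M.A) : Prop :=
  u ∈ M.Lang n ∧ ∀ i, u i ∈ C

/-- There is a word of length `n+1` over `C` beginning with `a` and ending with `b`. -/
def WordFromTo (C : Set M.A) (a b : M.A) (n : ℕ) : Prop :=
  ∃ u : Fin (n + 1) → M.A, M.WordOver u C ∧ u 0 = a ∧ u (Fin.last n) = b

/-- `C ⊆ A` is irreducible. -/
def IrreducibleSet (C : Set M.A) : Prop :=
  ∀ a ∈ C, ∀ b ∈ C, ∃ n : ℕ, M.WordFromTo C a b n

/-- `C` is an irreducible component (a maximal irreducible subset of `A`). -/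
def IrreducibleComponent (C : Set M.A) : Prop :=
  M.IrreducibleSet C ∧ ∀ C' : Set M.A, M.IrreducibleSet C' → C ⊆ C' → C' = C

/-- `C ⊆ A` is mixing. -/
def MixingSet (C : Set M.A) : Prop :=
  ∃ N : ℕ, 1 ≤ N ∧ ∀ a ∈ C, ∀ b ∈ C, ∀ n : ℕ, N ≤ n + 1 → M.WordFromTo C a b n

/-- `C` is a mixing component (a maximal mixing subset of `A`). -/
def MixingComponent (C : Set M.A) : Prop :=
  M.MixingSet C ∧ ∀ C' : Set M.A, M.MixingSet C' → C ⊆ C' → C' = C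

/-- The Irreducibility Condition (IC). -/
def IC : Prop := ∃ C : Set M.A, M.IrreducibleComponent C ∧ M.Ess ⊆ C

/-- The Mixing Condition (MC). -/
def MC : Prop := ∃ C : Set M.A, M.MixingComponent C ∧ M.Ess ⊆ C

/-- `Z` is a subshift of `Σ_M`: shift-invariant and closed in the product of discrete
topologies (closedness phrased combinatorially). -/
def IsSubshift (Z : Set (ℕ → M.A)) : Prop :=
  Z ⊆ M.SFT ∧ (∀ z ∈ Z, (fun k => z (k + 1)) ∈ Z) ∧
  ∀ x : ℕ → M.A, (∀ n : ℕ, ∃ z ∈ Z, ∀ i, i < n → z i = x i) → x ∈ Z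

/-- The symbol `a` occurs in some point of `Z`. -/
def SymbolInShift (Z : Set (ℕ → M.A)) (a : M.A) : Prop := ∃ z ∈ Z, ∃ k : ℕ, z k = a

/-- `Z` is transitive on symbols. -/
def TransitiveOnSymbols (Z : Set (ℕ → M.A)) : Prop :=
  ∀ a b : M.A, M.SymbolInShift Z a → M.SymbolInShift Z b →
    ∃ z ∈ Z, ∃ m n : ℕ, z m = a ∧ z (m + n) = b

end MarkovMultiMap

/-- The composition `g_{u₀} ∘ ⋯ ∘ g_{u_n}` of inverse maps along a list of symbols. -/
def gWordList (M : MarkovMultiMap) : List M.A → ℝ → ℝ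
  | [], x => x
  | a :: l, x => M.g a (gWordList M l x)

namespace MarkovMultiMap

/-- The inverse map `g_u` associated to a word `u = u₀⋯u_n`. -/
def gWord (M : MarkovMultiMap) {n : ℕ} (u : Fin (n + 1) → M.A) : ℝ → ℝ :=
  gWordList M (List.ofFn u)

/-- The interval `I_u = g_u(R(u_n))`. -/
def Iword (M : MarkovMultiMap) {n : ℕ} (u : Fin (n + 1) → M.A) : Set ℝ :=
  M.gWord u '' M.R (u (Fin.last n))

/-- The Coding Condition (CC). -/
def CC (M : MarkovMultiMap) : Prop :=
  ∃ Z : Set (ℕ → M.A), M.IsSubshift Z ∧ M.TransitiveOnSymbols Z ∧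
    (∀ y ∈ Set.Icc (0 : ℝ) 1, ∃ a ∈ Z, ∃ x ∈ M.X, x 0 = y ∧
      ∀ i : ℕ, (x i, x (i + 1)) ∈ M.Gr (a i)) ∧
    (∀ ε : ℝ, 0 < ε → ∃ N : ℕ, ∀ n : ℕ, N ≤ n → ∀ u : Fin (n + 1) → M.A,
      M.WordIn u Z → intervalLen (M.Iword u) < ε)

/-- Uniform equicontinuity of the family `{g_u : u ∈ L(C)}`. -/
def UnifEquicontOn (M : MarkovMultiMap) (C : Set M.A) : Prop :=
  ∀ ε : ℝ, 0 < ε → ∃ δ : ℝ, 0 < δ ∧ ∀ n : ℕ, ∀ u : Fin (n + 1) → M.A, M.WordOver u C →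
    ∀ x ∈ M.R (u (Fin.last n)), ∀ y ∈ M.R (u (Fin.last n)),
      |x - y| < δ → |M.gWord u x - M.gWord u y| < ε

end MarkovMultiMap

namespace CCAux

open Set List

variable (M : MarkovMultiMap)

noncomputable def gapF : Finset ℝ :=
  ((M.P ×ˢ M.P).filter fun pq => pq.1 < pq.2).image fun pq => pq.2 - pq.1

lemma gapF_nonempty : (gapF M).Nonempty := by
  refine ⟨1 - 0, ?_⟩
  simp only [gapF, Finset.mem_image]
  exact ⟨(0, 1), by simp [Finset.mem_filter, Finset.mem_product, M.P_zero, M.P_one], rfl⟩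

noncomputable def delta : ℝ := (gapF M).min' (gapF_nonempty M)

lemma delta_le {p q : ℝ} (hp : p ∈ M.P) (hq : q ∈ M.P) (h : p < q) : delta M ≤ q - p := by
  apply Finset.min'_le
  simp only [gapF, Finset.mem_image]
  exact ⟨(p, q), by simp [Finset.mem_filter, Finset.mem_product, hp, hq, h], rfl⟩

lemma delta_pos : 0 < delta M := by
  have h := Finset.min'_mem (gapF M) (gapF_nonempty M)
  simp only [gapF, Finset.mem_image, Finset.mem_filter, Finset.mem_product] at h
  obtain ⟨⟨p, q⟩, ⟨_, hlt⟩, he⟩ := h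
  have : (0:ℝ) < (p,q).2 - (p,q).1 := by simpa using hlt
  rw [he] at this; exact this

lemma memP01 {p : ℝ} (hp : p ∈ M.P) : 0 ≤ p ∧ p ≤ 1 := by
  have := M.P_sub (Finset.mem_coe.mpr hp); exact ⟨this.1, this.2⟩

lemma delta_le_one : delta M ≤ 1 := by
  have := delta_le M M.P_zero M.P_one one_pos; linarith

lemma A0_dom {a : M.A} (ha : a ∈ M.A0) : ∃ p q : ℝ, p ∈ M.P ∧ q ∈ M.P ∧ p < q ∧
    (∀ r ∈ M.P, ¬(p < r ∧ r < q)) ∧ M.D a = Icc p q ∧ M.D0 a = Ioo p q := by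
  obtain ⟨p, hp, q, hq, hpq, hadj, hD⟩ := M.D_A0 a ha
  exact ⟨p, q, hp, hq, hpq, hadj, hD, by rw [M.D0_A0 a ha, hD, interior_Icc]⟩

lemma A0_ran {a : M.A} (ha : a ∈ M.A0) : ∃ u v : ℝ, u ∈ M.P ∧ v ∈ M.P ∧ u < v ∧
    M.R a = Icc u v ∧ M.R0 a = Ioo u v := by
  obtain ⟨u, hu, v, hv, huv, hR⟩ := M.R_A0 a ha
  exact ⟨u, v, hu, hv, huv, hR, by
    rw [M.R0_A01 a (Set.mem_union_left _ ha), hR, interior_Icc]⟩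

lemma A1_ran {a : M.A} (ha : a ∈ M.A1) : ∃ u v : ℝ, u ∈ M.P ∧ v ∈ M.P ∧ u < v ∧
    M.R a = Icc u v ∧ M.R0 a = Ioo u v := by
  obtain ⟨u, hu, v, hv, huv, hR, _⟩ := M.R_A1 a ha
  exact ⟨u, v, hu, hv, huv, hR, by
    rw [M.R0_A01 a (Set.mem_union_right _ ha), hR, interior_Icc]⟩

lemma A12_dom {a : M.A} (ha : a ∈ M.A1 ∪ M.A2) : ∃ p : ℝ, p ∈ M.P ∧
    M.D a = {p} ∧ M.D0 a = {p} := by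
  obtain ⟨p, hp, hD⟩ := M.D_A12 a ha
  exact ⟨p, hp, hD, by rw [M.D0_A12 a ha, hD]⟩

lemma R0_subset_R (a : M.A) : M.R0 a ⊆ M.R a := by
  rcases M.A_cover a with h | h | h
  · rw [M.R0_A01 a (Set.mem_union_left _ h)]; exact interior_subset
  · rw [M.R0_A01 a (Set.mem_union_right _ h)]; exact interior_subset
  · rw [M.R0_A2 a h]

lemma D_subset_01 (a : M.A) : M.D a ⊆ Icc 0 1 := by
  rcases M.A_cover a with h | h | h
  · obtain ⟨p, q, hp, hq, _, _, hD, _⟩ := A0_dom M h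
    rw [hD]; exact Icc_subset_Icc (memP01 M hp).1 (memP01 M hq).2
  · obtain ⟨p, hp, hD, _⟩ := A12_dom M (Set.mem_union_left _ h)
    rw [hD]; intro x hx; rw [Set.mem_singleton_iff] at hx; subst hx
    exact ⟨(memP01 M hp).1, (memP01 M hp).2⟩
  · obtain ⟨p, hp, hD, _⟩ := A12_dom M (Set.mem_union_right _ h)
    rw [hD]; intro x hx; rw [Set.mem_singleton_iff] at hx; subst hx
    exact ⟨(memP01 M hp).1, (memP01 M hp).2⟩

def ExpSym (a : M.A) : Prop := a ∈ M.A0 ∧ (M.R0 a ∩ (M.P : Set ℝ)).Nonempty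

def GoodSym (a : M.A) : Prop := ExpSym M a ∨ a ∈ M.A1 ∨ a ∈ M.A2

lemma DsubR {a b : M.A} (h : M.D0 b ⊆ M.R0 a) : M.D b ⊆ M.R a := by
  rcases M.A_cover b with hb | hb | hb
  · obtain ⟨p, q, hp, hq, hpq, _, hD, hD0⟩ := A0_dom M hb
    rcases M.A_cover a with ha' | ha' | ha'
    · obtain ⟨u, v, _, _, huv, hR, hR0⟩ := A0_ran M ha'
      rw [hD0, hR0] at h; rw [hD, hR]
      have := (Set.Ioo_subset_Ioo_iff hpq).mp h
      exact Icc_subset_Icc this.1 this.2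
    · obtain ⟨u, v, _, _, huv, hR, hR0⟩ := A1_ran M ha'
      rw [hD0, hR0] at h; rw [hD, hR]
      have := (Set.Ioo_subset_Ioo_iff hpq).mp h
      exact Icc_subset_Icc this.1 this.2
    · obtain ⟨u, hu, hR⟩ := M.R_A2 a ha'
      have hR0 : M.R0 a = {u} := by rw [M.R0_A2 a ha', hR]
      rw [hD0, hR0] at h
      exfalso
      have h1 : (p + q) / 2 ∈ Ioo p q := ⟨by linarith, by linarith⟩
      have h2 : (p + 3 * q) / 4 ∈ Ioo p q := ⟨by linarith, by linarith⟩
      have e1 := h h1; have e2 := h h2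
      rw [Set.mem_singleton_iff] at e1 e2
      have : (p + q) / 2 ≠ (p + 3 * q) / 4 := by intro hh; nlinarith
      exact this (e1.trans e2.symm)
  · have hD := M.D0_A12 b (Set.mem_union_left _ hb)
    rw [← hD]; exact h.trans (R0_subset_R M a)
  · have hD := M.D0_A12 b (Set.mem_union_right _ hb)
    rw [← hD]; exact h.trans (R0_subset_R M a)

end CCAux
namespace CCAux

open Set List

variable (M : MarkovMultiMap)

lemma branch_over {p q : ℝ} (hp : p ∈ M.P) (hq : q ∈ M.P) (hpq : p < q)
    (hadj : ∀ r ∈ M.P, ¬(p < r ∧ r < q)) : ∃ a ∈ M.A0, M.D a = Icc p q := by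
  have hm : (p + q) / 2 ∈ Icc (0:ℝ) 1 := by
    have h1 := memP01 M hp; have h2 := memP01 M hq
    constructor <;> [linarith [h1.1, h2.1]; linarith [h1.2, h2.2]]
  rw [M.cover] at hm
  obtain ⟨_, ⟨a, rfl⟩, ha⟩ := hm
  change (p + q) / 2 ∈ M.D a at ha
  have hmp : p < (p + q) / 2 := by linarith
  have hmq : (p + q) / 2 < q := by linarith
  rcases M.A_cover a with h0 | h12 | h12
  · obtain ⟨p', q', hp', hq', hpq', hadj', hD, _⟩ := A0_dom M h0
    rw [hD] at ha
    obtain ⟨ham, haM⟩ := ha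
    have hq'q : q' = q := by
      rcases lt_trichotomy q' q with hlt | heq | hgt
      · exact absurd ⟨by linarith, hlt⟩ (hadj q' hq')
      · exact heq
      · exact absurd ⟨by linarith, hgt⟩ (hadj' q hq)
    have hp'p : p' = p := by
      rcases lt_trichotomy p' p with hlt | heq | hgt
      · exact absurd ⟨hlt, by linarith⟩ (hadj' p hp)
      · exact heq
      · exact absurd ⟨hgt, by linarith⟩ (hadj p' hp')
    exact ⟨a, h0, by rw [hD, hp'p, hq'q]⟩
  · obtain ⟨r, hr, hD, _⟩ := A12_dom M (Set.mem_union_left _ h12)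
    rw [hD, Set.mem_singleton_iff] at ha
    exact absurd ⟨ha ▸ hmp, ha ▸ hmq⟩ (hadj _ hr)
  · obtain ⟨r, hr, hD, _⟩ := A12_dom M (Set.mem_union_right _ h12)
    rw [hD, Set.mem_singleton_iff] at ha
    exact absurd ⟨ha ▸ hmp, ha ▸ hmq⟩ (hadj _ hr)

lemma exists_adjacent {u v y : ℝ} (hu : u ∈ M.P) (hv : v ∈ M.P) (huv : u < v)
    (hy : y ∈ Icc u v) : ∃ p q : ℝ, p ∈ M.P ∧ q ∈ M.P ∧ p < q ∧
    (∀ r ∈ M.P, ¬(p < r ∧ r < q)) ∧ y ∈ Icc p q ∧ Icc p q ⊆ Icc u v := by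
  by_cases hyv : y < v
  · set s : Finset ℝ := M.P.filter (fun r => u ≤ r ∧ r ≤ y) with hs_def
    have hs : s.Nonempty := ⟨u, by simp [hs_def, hu, hy.1]⟩
    set p := s.max' hs with hp_def
    have hpmem : p ∈ s := s.max'_mem hs
    rw [hs_def, Finset.mem_filter] at hpmem
    obtain ⟨hpP, hup, hpy⟩ := hpmem
    set s2 : Finset ℝ := M.P.filter (fun r => y < r ∧ r ≤ v) with hs2_def
    have hs2 : s2.Nonempty := ⟨v, by simp [hs2_def, hv, hyv]⟩
    set q := s2.min' hs2 with hq_def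
    have hqmem : q ∈ s2 := s2.min'_mem hs2
    rw [hs2_def, Finset.mem_filter] at hqmem
    obtain ⟨hqP, hyq, hqv⟩ := hqmem
    refine ⟨p, q, hpP, hqP, lt_of_le_of_lt hpy hyq, ?_, ⟨hpy, hyq.le⟩,
      Icc_subset_Icc hup hqv⟩
    rintro r hrP ⟨hpr, hrq⟩
    by_cases hry : r ≤ y
    · have : r ∈ s := by
        rw [hs_def, Finset.mem_filter]; exact ⟨hrP, le_trans hup hpr.le, hry⟩
      exact absurd (s.le_max' r this) (not_le.mpr hpr)
    · have : r ∈ s2 := by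
        rw [hs2_def, Finset.mem_filter]
        exact ⟨hrP, not_le.mp hry, le_trans hrq.le hqv⟩
      exact absurd (s2.min'_le r this) (not_le.mpr hrq)
  · have hyv' : y = v := le_antisymm hy.2 (not_lt.mp hyv)
    set s : Finset ℝ := M.P.filter (fun r => u ≤ r ∧ r < v) with hs_def
    have hs : s.Nonempty := ⟨u, by simp [hs_def, hu, huv]⟩
    set p := s.max' hs with hp_def
    have hpmem : p ∈ s := s.max'_mem hs
    rw [hs_def, Finset.mem_filter] at hpmem
    obtain ⟨hpP, hup, hpv⟩ := hpmem
    refine ⟨p, v, hpP, hv, hpv, ?_, by rw [hyv']; exact ⟨hpv.le, le_refl v⟩,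
      Icc_subset_Icc hup (le_refl v)⟩
    rintro r hrP ⟨hpr, hrv⟩
    have : r ∈ s := by
      rw [hs_def, Finset.mem_filter]; exact ⟨hrP, le_trans hup hpr.le, hrv⟩
    exact absurd (s.le_max' r this) (not_le.mpr hpr)

lemma branch_in {u v y : ℝ} (hu : u ∈ M.P) (hv : v ∈ M.P) (huv : u < v)
    (hy : y ∈ Icc u v) : ∃ b ∈ M.A0, y ∈ M.D b ∧ M.D b ⊆ Icc u v ∧
    M.D0 b ⊆ Ioo u v := by
  obtain ⟨p, q, hp, hq, hpq, hadj, hyp, hsub⟩ := exists_adjacent M hu hv huv hy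
  obtain ⟨b, hb, hD⟩ := branch_over M hp hq hpq hadj
  refine ⟨b, hb, by rw [hD]; exact hyp, by rw [hD]; exact hsub, ?_⟩
  rw [M.D0_A0 b hb, ← interior_Icc (a := u)]
  exact interior_mono (by rw [hD]; exact hsub)

lemma shrink {p q u v : ℝ} (hp : p ∈ M.P) (hq : q ∈ M.P) (hu : u ∈ M.P)
    (hv : v ∈ M.P) (hpq : p < q) (huv : u < v) (hsub : Icc p q ⊆ Icc u v)
    (hadj : ∀ r ∈ M.P, ¬(p < r ∧ r < q))
    (hexp : ∃ r, r ∈ M.P ∧ r ∈ Ioo u v) : q - p ≤ (1 - delta M) * (v - u) := by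
  obtain ⟨r, hr, hru, hrv⟩ := hexp
  have hbounds := (Set.Icc_subset_Icc_iff hpq.le).mp hsub
  have hδ := delta_pos M
  have hvu1 : v - u ≤ 1 := by
    have h1 := memP01 M hu; have h2 := memP01 M hv; linarith [h1.1, h2.2]
  by_cases hc : r ≤ p
  · have hdel : delta M ≤ r - u := delta_le M hu hr hru
    nlinarith
  · have hrq : q ≤ r := by
      by_contra hh
      exact hadj r hr ⟨not_le.mp hc, not_le.mp hh⟩
    have hdel : delta M ≤ v - r := delta_le M hr hv hrv
    nlinarith

lemma affine_image_Icc (m k s t : ℝ) (hm : m ≠ 0) (hst : s ≤ t) :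
    ∃ s' t', s' ≤ t' ∧ (fun y => m * y + k) '' Icc s t = Icc s' t' ∧
    t' - s' = |m| * (t - s) := by
  rcases lt_or_gt_of_ne hm with hneg | hpos
  · refine ⟨m * t + k, m * s + k, by nlinarith, ?_, by rw [abs_of_neg hneg]; ring⟩
    ext z; simp only [Set.mem_image, Set.mem_Icc]; constructor
    · rintro ⟨y, ⟨h1, h2⟩, rfl⟩; constructor <;> nlinarith
    · rintro ⟨h1, h2⟩
      refine ⟨(z - k) / m, ⟨?_, ?_⟩, by field_simp; ring⟩
      · rw [le_div_iff_of_neg hneg]; linarith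
      · rw [div_le_iff_of_neg hneg]; linarith
  · refine ⟨m * s + k, m * t + k, by nlinarith, ?_, by rw [abs_of_pos hpos]; ring⟩
    ext z; simp only [Set.mem_image, Set.mem_Icc]; constructor
    · rintro ⟨y, ⟨h1, h2⟩, rfl⟩; constructor <;> nlinarith
    · rintro ⟨h1, h2⟩
      refine ⟨(z - k) / m, ⟨?_, ?_⟩, by field_simp; ring⟩
      · rw [le_div_iff₀ hpos]; linarith
      · rw [div_le_iff₀ hpos]; linarith

lemma Icc_eq_endpoints {a b c d : ℝ} (hab : a ≤ b) (h : Icc a b = Icc c d) :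
    a = c ∧ b = d := by
  have h1 : a ∈ Icc c d := h ▸ Set.left_mem_Icc.mpr hab
  have h2 : b ∈ Icc c d := h ▸ Set.right_mem_Icc.mpr hab
  have hcd : c ≤ d := le_trans h1.1 h1.2
  have h3 : c ∈ Icc a b := h.symm ▸ Set.left_mem_Icc.mpr hcd
  have h4 : d ∈ Icc a b := h.symm ▸ Set.right_mem_Icc.mpr hcd
  exact ⟨le_antisymm h3.1 h1.1, le_antisymm h2.2 h4.2⟩

lemma g_affine (hlin : ∀ a ∈ M.A0, ∃ c d : ℝ, ∀ x ∈ M.D a, M.f a x = c * x + d)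
    {a : M.A} (ha : a ∈ M.A0) {p q u v : ℝ}
    (hD : M.D a = Icc p q) (hR : M.R a = Icc u v) (hpq : p < q) (huv : u < v) :
    (∀ s t : ℝ, s ≤ t → Icc s t ⊆ M.R a → ∃ s' t', s' ≤ t' ∧
      M.g a '' Icc s t = Icc s' t' ∧ (t' - s') * (v - u) = (t - s) * (q - p)) ∧
    M.g a '' M.R a = M.D a := by
  obtain ⟨c, d, hcd⟩ := hlin a ha
  have hbij := (M.f_homeo a ha).2
  have himg0 : M.f a '' M.D a = M.R a := hbij.image_eq
  have hgid := (M.g_A0 a ha).1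
  have hgmem := fun y hy => ((M.g_A0 a ha).2 y hy).1
  have hgf := fun y hy => ((M.g_A0 a ha).2 y hy).2
  have hc : c ≠ 0 := by
    intro hc0
    have hmem1 : p ∈ M.D a := by rw [hD]; exact Set.left_mem_Icc.mpr hpq.le
    have hmem2 : q ∈ M.D a := by rw [hD]; exact Set.right_mem_Icc.mpr hpq.le
    have := hbij.injOn.ne hmem1 hmem2 (ne_of_lt hpq)
    rw [hcd p hmem1, hcd q hmem2, hc0] at this
    simp at this
  have himg : (fun x => c * x + d) '' Icc p q = Icc u v := by
    rw [← hD, ← hR, ← himg0]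
    exact (Set.image_congr fun x hx => (hcd x hx).symm)
  obtain ⟨s0, t0, hst0, heq0, hlen0⟩ := affine_image_Icc c d p q hc hpq.le
  rw [himg] at heq0
  obtain ⟨hus0, hvt0⟩ := Icc_eq_endpoints huv.le heq0
  have hvu : v - u = |c| * (q - p) := by rw [hus0, hvt0]; exact hlen0
  have gval : ∀ y ∈ M.R a, M.g a y = (y - d) / c := by
    intro y hy
    obtain ⟨x, hxD, hfx⟩ := hbij.surjOn hy
    have hyx : y = c * x + d := by rw [← hfx, hcd x hxD]
    have hgx : M.g a y = x := by rw [← hfx, hgid x hxD]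
    rw [hgx, hyx]
    field_simp
    ring
  constructor
  · intro s t hst hsubR
    have himg2 : M.g a '' Icc s t = (fun y => c⁻¹ * y + (-d / c)) '' Icc s t := by
      apply Set.image_congr
      intro y hy
      rw [gval y (hsubR hy)]
      field_simp
      ring
    obtain ⟨s', t', hst', heq', hlen'⟩ := affine_image_Icc c⁻¹ (-d / c) s t
      (inv_ne_zero hc) hst
    refine ⟨s', t', hst', by rw [himg2, heq'], ?_⟩
    rw [hlen', hvu, abs_inv]
    have : |c| ≠ 0 := abs_ne_zero.mpr hc
    field_simp
  · apply Set.Subset.antisymm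
    · intro z hz
      obtain ⟨y, hy, rfl⟩ := hz
      exact hgmem y hy
    · intro x hx
      exact ⟨M.f a x, hbij.mapsTo hx, hgid x hx⟩

end CCAux
namespace CCAux

open Set List

variable (M : MarkovMultiMap)

open Classical in
noncomputable def eCnt : List M.A → ℕ
  | [] => 0
  | [_] => 0
  | a :: b :: t => (if ExpSym M a then 1 else 0) + eCnt (b :: t)

open Classical in
lemma eCnt_cons_cons (a b : M.A) (t : List M.A) :
    eCnt M (a :: b :: t) = (if ExpSym M a then 1 else 0) + eCnt M (b :: t) := rfl

lemma eCnt_ge : ∀ (l : List M.A) (K : ℕ) (φ : ℕ → ℕ), StrictMono φ →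
    (∀ w, w < K → ∃ h : φ w + 1 < l.length, ExpSym M (l.get ⟨φ w, by omega⟩)) →
    K ≤ eCnt M l := by
  intro l
  induction l with
  | nil =>
    intro K φ _ h
    rcases Nat.eq_zero_or_pos K with rfl | hK
    · exact Nat.zero_le _
    · obtain ⟨hl, _⟩ := h 0 hK; simp at hl
  | cons a t ih =>
    intro K φ hm h
    cases t with
    | nil =>
      rcases Nat.eq_zero_or_pos K with rfl | hK
      · exact Nat.zero_le _
      · obtain ⟨hl, _⟩ := h 0 hK; simp at hl
    | cons b t' =>
      cases K with
      | zero => exact Nat.zero_le _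
      | succ K' =>
        by_cases h0 : φ 0 = 0
        · obtain ⟨hl0, hE0⟩ := h 0 (Nat.succ_pos _)
          have hEa : ExpSym M a := by
            have : (a :: b :: t').get ⟨φ 0, by omega⟩ = a := by
              simp [h0]
            rwa [this] at hE0
          have hφ1 : ∀ w, 1 ≤ φ (w + 1) := by
            intro w
            have := hm (Nat.lt_of_lt_of_le Nat.zero_lt_one (Nat.le_add_left 1 w))
            omega
          have hrec : K' ≤ eCnt M (b :: t') := by
            apply ih K' (fun w => φ (w + 1) - 1)
            · apply strictMono_nat_of_lt_succ
              intro w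
              have h1 : φ (w + 1) < φ (w + 1 + 1) := hm (by omega)
              have h2 := hφ1 w
              omega
            · intro w hw
              obtain ⟨hl, hE⟩ := h (w + 1) (by omega)
              have h2 := hφ1 w
              have hL1 : (a :: b :: t').length = t'.length + 2 := rfl
              have hL2 : (b :: t').length = t'.length + 1 := rfl
              refine ⟨by omega, ?_⟩
              have hg : (b :: t').get ⟨φ (w + 1) - 1, by omega⟩
                  = (a :: b :: t').get ⟨φ (w + 1), by omega⟩ := by
                have hj : φ (w + 1) - 1 + 1 = φ (w + 1) := by omega
                have e1 : (a :: b :: t')[(φ (w + 1) - 1) + 1]'(by omega)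
                    = (b :: t')[φ (w + 1) - 1]'(by omega) := List.getElem_cons_succ _ _ _ _
                simp only [hj] at e1
                rw [List.get_eq_getElem, List.get_eq_getElem]
                exact e1.symm
              rwa [hg]
          rw [eCnt_cons_cons, if_pos hEa]
          omega
        · have hφ1 : ∀ w, 1 ≤ φ w := by
            intro w
            have := hm.monotone (Nat.zero_le w)
            omega
          have hrec : K' + 1 ≤ eCnt M (b :: t') := by
            apply ih (K' + 1) (fun w => φ w - 1)
            · apply strictMono_nat_of_lt_succ
              intro w
              have h1 : φ w < φ (w + 1) := hm (by omega)
              have h2 := hφ1 w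
              omega
            · intro w hw
              obtain ⟨hl, hE⟩ := h w hw
              have h2 := hφ1 w
              have hL1 : (a :: b :: t').length = t'.length + 2 := rfl
              have hL2 : (b :: t').length = t'.length + 1 := rfl
              refine ⟨by omega, ?_⟩
              have hg : (b :: t').get ⟨φ w - 1, by omega⟩
                  = (a :: b :: t').get ⟨φ w, by omega⟩ := by
                have hj : φ w - 1 + 1 = φ w := by omega
                have e1 : (a :: b :: t')[(φ w - 1) + 1]'(by omega)
                    = (b :: t')[φ w - 1]'(by omega) := List.getElem_cons_succ _ _ _ _
                simp only [hj] at e1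
                rw [List.get_eq_getElem, List.get_eq_getElem]
                exact e1.symm
              rwa [hg]
          rw [eCnt_cons_cons]
          omega

lemma R_nonempty (a : M.A) : (M.R a).Nonempty := by
  rcases M.A_cover a with h | h | h
  · obtain ⟨u, v, _, _, huv, hR, _⟩ := A0_ran M h
    exact ⟨u, by rw [hR]; exact Set.left_mem_Icc.mpr huv.le⟩
  · obtain ⟨u, v, _, _, huv, hR, _⟩ := A1_ran M h
    exact ⟨u, by rw [hR]; exact Set.left_mem_Icc.mpr huv.le⟩
  · obtain ⟨u, _, hR⟩ := M.R_A2 a h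
    exact ⟨u, by rw [hR]; rfl⟩

lemma g_const_image {a : M.A} (ha : a ∈ M.A1 ∪ M.A2) {S : Set ℝ}
    (hS : S.Nonempty) (hsub : S ⊆ M.R a) :
    ∃ w, w ∈ M.P ∧ M.D a = {w} ∧ M.g a '' S = {w} := by
  obtain ⟨w, hw, hD, _⟩ := A12_dom M ha
  refine ⟨w, hw, hD, ?_⟩
  apply Set.Subset.antisymm
  · rintro z ⟨y, hy, rfl⟩
    have := M.g_A12 a ha y (hsub hy)
    rwa [hD] at this
  · rintro z hz
    rw [Set.mem_singleton_iff] at hz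
    obtain ⟨y0, hy0⟩ := hS
    have := M.g_A12 a ha y0 (hsub hy0)
    rw [hD, Set.mem_singleton_iff] at this
    exact ⟨y0, hy0, by rw [this, hz]⟩

lemma not_A0_A12 {a : M.A} (ha : a ∈ M.A0) (hb : a ∈ M.A1 ∪ M.A2) : False := by
  rcases hb with hb | hb
  · have : a ∈ M.A0 ∩ M.A1 := ⟨ha, hb⟩
    rw [M.A01] at this; exact this
  · have : a ∈ M.A0 ∩ M.A2 := ⟨ha, hb⟩
    rw [M.A02] at this; exact this

theorem key_bound (hlin : ∀ a ∈ M.A0, ∃ c d : ℝ, ∀ x ∈ M.D a, M.f a x = c * x + d) :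
    ∀ l : List M.A, l.Chain' (fun a b => M.D0 b ⊆ M.R0 a) → l ≠ [] →
    ∃ α β p q : ℝ, α ≤ β ∧ p ∈ M.P ∧ q ∈ M.P ∧ p ≤ q ∧ (∀ x ∈ l.head?, M.D x = Icc p q) ∧
      (∀ x ∈ l.getLast?, gWordList M l '' M.R x = Icc α β) ∧
      Icc α β ⊆ Icc p q ∧
      β - α ≤ (q - p) * (1 - delta M) ^ (eCnt M l) ∧
      ((∃ c ∈ l, c ∈ M.A1 ∪ M.A2) → β = α) := by
  have hδ1 : 0 ≤ 1 - delta M := by linarith [delta_le_one M]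
  intro l
  induction l with
  | nil => intro _ h; exact absurd rfl h
  | cons a t ih =>
    intro hadm _
    cases t with
    | nil =>
      -- base case: single symbol
      rcases M.A_cover a with ha | ha | ha
      · obtain ⟨p, q, hp, hq, hpq, _, hD, _⟩ := A0_dom M ha
        obtain ⟨u, v, hu, hv, huv, hR, _⟩ := A0_ran M ha
        have himg := (g_affine M hlin ha hD hR hpq huv).2
        refine ⟨p, q, p, q, hpq.le, hp, hq, hpq.le, ?_, ?_, le_refl _, ?_, ?_⟩
        · intro x hx
          simp only [List.head?_cons, Option.mem_def, Option.some.injEq] at hx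
          subst hx; exact hD
        · intro x hx
          simp only [List.getLast?_singleton, Option.mem_def, Option.some.injEq] at hx
          subst hx
          show M.g a '' M.R a = Icc p q
          rw [himg, hD]
        · have : eCnt M [a] = 0 := rfl
          rw [this, pow_zero, mul_one]
        · rintro ⟨c, hc, hc12⟩
          simp only [List.mem_singleton] at hc
          subst hc
          exact absurd hc12 (fun h => not_A0_A12 M ha h)
      all_goals {
        first
        | (have ha' : a ∈ M.A1 ∪ M.A2 := Set.mem_union_left _ ha)
        | (have ha' : a ∈ M.A1 ∪ M.A2 := Set.mem_union_right _ ha)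
        obtain ⟨w, hw, hD, himg⟩ := g_const_image M ha' (R_nonempty M a)
          (subset_refl _)
        refine ⟨w, w, w, w, le_refl _, hw, hw, le_refl _, ?_, ?_,
          by rw [Set.Icc_self], by simp, fun _ => rfl⟩
        · intro x hx
          simp only [List.head?_cons, Option.mem_def, Option.some.injEq] at hx
          subst hx; rw [hD, Set.Icc_self]
        intro x hx
        simp only [List.getLast?_singleton, Option.mem_def, Option.some.injEq] at hx
        subst hx
        show M.g a '' M.R a = Icc w w
        rw [himg, Set.Icc_self] }
    | cons b t' =>
      unfold List.Chain' at hadm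
      rw [List.isChain_cons_cons] at hadm
      obtain ⟨hrel, hadm'⟩ := hadm
      obtain ⟨α', β', p', q', hαβ', hp', hq', hpq', hDb, himg', hsub', hbound', h12'⟩ :=
        ih hadm' (List.cons_ne_nil _ _)
      have hDbhead : M.D b = Icc p' q' := hDb b (by simp)
      have hDbR : M.D b ⊆ M.R a := DsubR M hrel
      have hsubR : Icc α' β' ⊆ M.R a := fun x hx => hDbR (hDbhead ▸ hsub' hx)
      have hglist : gWordList M (a :: b :: t') = fun x => M.g a (gWordList M (b :: t') x) := rfl
      have hgl' : ∀ x ∈ (b :: t').getLast?,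
          gWordList M (a :: b :: t') '' M.R x = M.g a '' Icc α' β' := by
        intro x hx
        rw [hglist, ← Set.image_image (g := M.g a) (f := gWordList M (b :: t')), himg' x hx]
      have heCnt := eCnt_cons_cons M a b t' 
      rcases M.A_cover a with ha | ha | ha
      · -- a ∈ A0
        obtain ⟨p, q, hp, hq, hpq, _, hD, _⟩ := A0_dom M ha
        obtain ⟨u, v, hu, hv, huv, hR, hR0⟩ := A0_ran M ha
        obtain ⟨s', t'', hst', himg2, hlen2⟩ :=
          (g_affine M hlin ha hD hR hpq huv).1 α' β' hαβ' hsubR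
        have hDaImg := (g_affine M hlin ha hD hR hpq huv).2
        have hsub2 : Icc s' t'' ⊆ Icc p q := by
          rw [← himg2, ← hD, ← hDaImg]
          exact Set.image_mono hsubR
        have hIccUV : Icc p' q' ⊆ Icc u v := by rw [← hDbhead, ← hR]; exact hDbR
        have hq'v : q' ≤ v ∧ u ≤ p' := by
          have := (Set.Icc_subset_Icc_iff hpq').mp hIccUV
          exact ⟨this.2, this.1⟩
        refine ⟨s', t'', p, q, hst', hp, hq, hpq.le, ?_, ?_, hsub2, ?_, ?_⟩
        · intro x hx
          simp only [List.head?_cons, Option.mem_def, Option.some.injEq] at hx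
          subst hx; exact hD
        · intro x hx
          rw [List.getLast?_cons_cons] at hx
          rw [hgl' x hx, himg2]
        · -- the length bound
          set X := (1 - delta M) ^ (eCnt M (b :: t')) with hX_def
          have hXnn : 0 ≤ X := pow_nonneg hδ1 _
          have hβα'nn : 0 ≤ β' - α' := by linarith
          have hqp : 0 < q - p := by linarith
          have hvu : 0 < v - u := by linarith
          have hq'p'nn : 0 ≤ q' - p' := by linarith
          by_cases hE : ExpSym M a
          · -- expanding: use shrink
            have hshr : q' - p' ≤ (1 - delta M) * (v - u) := by
              rcases M.A_cover b with hb | hb | hb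
              · obtain ⟨p'', q'', hp'', hq'', hpq'', hadj'', hDb'', _⟩ := A0_dom M hb
                have : Icc p'' q'' = Icc p' q' := by rw [← hDb'', hDbhead]
                obtain ⟨hpe, hqe⟩ := Icc_eq_endpoints hpq''.le this
                subst hpe; subst hqe
                obtain ⟨r, hrR0, hrP⟩ := hE.2
                rw [hR0] at hrR0
                exact shrink M hp'' hq'' hu hv hpq'' huv hIccUV hadj''
                  ⟨r, Finset.mem_coe.mp hrP, hrR0⟩
              all_goals {
                first
                | (have hb' : b ∈ M.A1 ∪ M.A2 := Set.mem_union_left _ hb)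
                | (have hb' : b ∈ M.A1 ∪ M.A2 := Set.mem_union_right _ hb)
                obtain ⟨w, hw, hDb'', _⟩ := A12_dom M hb'
                have : Icc p' q' = Icc w w := by rw [← hDbhead, hDb'', Set.Icc_self]
                obtain ⟨hpe, hqe⟩ := Icc_eq_endpoints hpq' this
                have : q' - p' = 0 := by rw [hpe, hqe]; ring
                rw [this]
                positivity }
            rw [heCnt, if_pos hE]
            have h1 : (t'' - s') * (v - u) = (β' - α') * (q - p) := hlen2
            have h2 : (β' - α') * (q - p) ≤ ((q' - p') * X) * (q - p) :=
              mul_le_mul_of_nonneg_right hbound' hqp.le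
            have h3 : ((q' - p') * X) * (q - p) ≤ (((1 - delta M) * (v - u)) * X) * (q - p) :=
              mul_le_mul_of_nonneg_right (mul_le_mul_of_nonneg_right hshr hXnn) hqp.le
            have h4 : (t'' - s') * (v - u) ≤ ((q - p) * ((1 - delta M) ^ (1 + eCnt M (b :: t')))) * (v - u) := by
              have : (((1 - delta M) * (v - u)) * X) * (q - p)
                  = ((q - p) * ((1 - delta M) ^ (1 + eCnt M (b :: t')))) * (v - u) := by
                rw [hX_def, pow_add, pow_one]; ring
              linarith [h2.trans h3, h1]
            exact le_of_mul_le_mul_right (by linarith [h4]) hvu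
          · -- not expanding
            have hshr : q' - p' ≤ v - u := by linarith [hq'v.1, hq'v.2]
            rw [heCnt, if_neg hE]
            have h1 : (t'' - s') * (v - u) = (β' - α') * (q - p) := hlen2
            have h2 : (β' - α') * (q - p) ≤ ((q' - p') * X) * (q - p) :=
              mul_le_mul_of_nonneg_right hbound' hqp.le
            have h3 : ((q' - p') * X) * (q - p) ≤ ((v - u) * X) * (q - p) :=
              mul_le_mul_of_nonneg_right (mul_le_mul_of_nonneg_right hshr hXnn) hqp.le
            have h4 : (t'' - s') * (v - u) ≤ ((q - p) * ((1 - delta M) ^ (0 + eCnt M (b :: t')))) * (v - u) := by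
              have : ((v - u) * X) * (q - p)
                  = ((q - p) * ((1 - delta M) ^ (0 + eCnt M (b :: t')))) * (v - u) := by
                rw [hX_def, Nat.zero_add]; ring
              linarith [h2.trans h3, h1]
            exact le_of_mul_le_mul_right (by linarith [h4]) hvu
        · -- A12 element forces degenerate
          rintro ⟨c, hc, hc12⟩
          rcases List.mem_cons.mp hc with rfl | hc'
          · exact absurd hc12 (fun h => not_A0_A12 M ha h)
          · have hβα : β' = α' := h12' ⟨c, hc', hc12⟩
            have : (t'' - s') * (v - u) = 0 := by
              rw [hlen2, hβα]; ring
            have hvu : 0 < v - u := by linarith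
            have : t'' - s' = 0 := by
              rcases mul_eq_zero.mp this with h | h
              · exact h
              · linarith
            linarith
      all_goals {
        first
        | (have ha' : a ∈ M.A1 ∪ M.A2 := Set.mem_union_left _ ha)
        | (have ha' : a ∈ M.A1 ∪ M.A2 := Set.mem_union_right _ ha)
        obtain ⟨w, hw, hD, himgc⟩ := g_const_image M ha'
          (⟨α', Set.left_mem_Icc.mpr hαβ'⟩ : (Icc α' β').Nonempty) hsubR
        refine ⟨w, w, w, w, le_refl _, hw, hw, le_refl _, ?_, ?_,
          by rw [Set.Icc_self], by simp, fun _ => rfl⟩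
        · intro x hx
          simp only [List.head?_cons, Option.mem_def, Option.some.injEq] at hx
          subst hx; rw [hD, Set.Icc_self]
        intro x hx
        rw [List.getLast?_cons_cons] at hx
        rw [hgl' x hx, himgc, Set.Icc_self] }


end CCAux

namespace CCAux

open Set List

variable (M : MarkovMultiMap)

def Adm (l : List M.A) : Prop := l.Chain' (fun a b => M.D0 b ⊆ M.R0 a)

def ReachExp (b : M.A) : Prop := ∃ l : List M.A, Adm M l ∧ (∀ a ∈ l, a ∈ M.A0) ∧
  l.head? = some b ∧ (∀ x ∈ l.getLast?, ExpSym M x)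

lemma word_adjacent {n : ℕ} {u : Fin (n + 1) → M.A} (hu : u ∈ M.Lang (n + 1)) :
    ∀ i : ℕ, ∀ h : i < n, M.D0 (u ⟨i + 1, by omega⟩) ⊆ M.R0 (u ⟨i, by omega⟩) := by
  obtain ⟨z, hz, m, hzm⟩ := hu
  intro i h
  have h1 : u ⟨i, by omega⟩ = z (m + i) := hzm ⟨i, by omega⟩
  have h2 : u ⟨i + 1, by omega⟩ = z (m + i + 1) := by
    have := hzm ⟨i + 1, by omega⟩
    rw [this]
    rfl
  rw [h1, h2]
  exact hz (m + i)

lemma nonexp_succ {a c : M.A} (ha : a ∈ M.A0) (hna : ¬ ExpSym M a)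
    (hadj : M.D0 c ⊆ M.R0 a) : c ∈ M.A0 ∧ M.D c = M.R a := by
  obtain ⟨u, v, hu, hv, huv, hR, hR0⟩ := A0_ran M ha
  have hnoP : ∀ r ∈ M.P, r ∉ Ioo u v := by
    intro r hr hrI
    exact hna ⟨ha, ⟨r, by rw [hR0]; exact hrI, Finset.mem_coe.mpr hr⟩⟩
  rcases M.A_cover c with hc | hc | hc
  · obtain ⟨p, q, hp, hq, hpq, _, hD, hD0⟩ := A0_dom M hc
    rw [hD0, hR0] at hadj
    have hb := (Set.Ioo_subset_Ioo_iff hpq).mp hadj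
    have hpu : p = u := by
      rcases eq_or_lt_of_le hb.1 with h | h
      · exact h.symm
      · exact absurd ⟨h, by linarith⟩ (fun hh => hnoP p hp hh)
    have hqv : q = v := by
      rcases eq_or_lt_of_le hb.2 with h | h
      · exact h
      · exact absurd ⟨by linarith, h⟩ (fun hh => hnoP q hq hh)
    exact ⟨hc, by rw [hD, hR, hpu, hqv]⟩
  all_goals {
    first
    | (have hc' : c ∈ M.A1 ∪ M.A2 := Set.mem_union_left _ hc)
    | (have hc' : c ∈ M.A1 ∪ M.A2 := Set.mem_union_right _ hc)
    obtain ⟨r, hr, _, hD0⟩ := A12_dom M hc'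
    rw [hD0, hR0] at hadj
    have : r ∈ Ioo u v := hadj rfl
    exact absurd this (hnoP r hr) }

lemma reach_exp (hexist : ∃ a ∈ M.A0, (M.R0 a ∩ (M.P : Set ℝ)).Nonempty)
    {C0 : Set M.A} (hC0 : M.IrreducibleSet C0) (hA0C0 : M.A0 ⊆ C0) :
    ∀ b ∈ M.A0, ReachExp M b := by
  obtain ⟨astar, hastar0, hexp⟩ := hexist
  have hExpStar : ExpSym M astar := ⟨hastar0, hexp⟩
  intro b hb
  by_contra hnr
  obtain ⟨n, u, ⟨huLang, huC0⟩, hu0, hulast⟩ := hC0 b (hA0C0 hb) astar (hA0C0 hastar0)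
  have hadj := word_adjacent M huLang
  have key : ∀ i : ℕ, ∀ h : i ≤ n, ¬ ReachExp M (u ⟨i, by omega⟩) ∧
      u ⟨i, by omega⟩ ∈ M.A0 := by
    intro i
    induction i with
    | zero =>
      intro _
      have e : (⟨0, by omega⟩ : Fin (n + 1)) = 0 := Fin.ext rfl
      rw [e, hu0]
      exact ⟨hnr, hb⟩
    | succ i ihi =>
      intro h
      obtain ⟨hnr_i, hA0_i⟩ := ihi (by omega)
      have hnexp_i : ¬ ExpSym M (u ⟨i, by omega⟩) := by
        intro hE
        exact hnr_i ⟨[u ⟨i, by omega⟩], List.isChain_singleton _,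
          by intro x hx; rw [List.mem_singleton] at hx; subst hx; exact hA0_i,
          rfl, by intro x hx; simp only [List.getLast?_singleton,
            Option.mem_def, Option.some.injEq] at hx; subst hx; exact hE⟩
      have hadj_i : M.D0 (u ⟨i + 1, by omega⟩) ⊆ M.R0 (u ⟨i, by omega⟩) :=
        hadj i (by omega)
      have hsucc := nonexp_succ M hA0_i hnexp_i hadj_i
      refine ⟨?_, hsucc.1⟩
      intro hre
      obtain ⟨l, hlA, hl0, hlh, hll⟩ := hre
      apply hnr_i
      refine ⟨u ⟨i, by omega⟩ :: l, ?_, ?_, rfl, ?_⟩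
      · unfold Adm
        unfold List.Chain'
        rw [List.isChain_cons]
        refine ⟨fun y hy => ?_, hlA⟩
        rw [hlh, Option.mem_def, Option.some.injEq] at hy
        subst hy
        exact hadj_i
      · intro x hx
        rcases List.mem_cons.mp hx with rfl | hx'
        · exact hA0_i
        · exact hl0 x hx'
      · intro x hx
        have hlne : l ≠ [] := by
          intro hnil; rw [hnil] at hlh; simp at hlh
        cases l with
        | nil => exact absurd rfl hlne
        | cons c t =>
          rw [List.getLast?_cons_cons] at hx
          exact hll x hx
  have hfin := (key n (le_refl n)).1
  have e : (⟨n, by omega⟩ : Fin (n + 1)) = Fin.last n := Fin.ext rfl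
  rw [e, hulast] at hfin
  exact hfin ⟨[astar], List.isChain_singleton _,
    by intro x hx; rw [List.mem_singleton] at hx; subst hx; exact hastar0,
    rfl, by intro x hx; simp only [List.getLast?_singleton,
      Option.mem_def, Option.some.injEq] at hx; subst hx; exact hExpStar⟩

lemma trim : ∀ l : List M.A, Adm M l → (∀ a ∈ l, a ∈ M.A0) →
    (∀ x ∈ l.getLast?, ExpSym M x) → l ≠ [] →
    ∃ l' : List M.A, Adm M l' ∧ (∀ a ∈ l', a ∈ M.A0) ∧ l'.head? = l.head? ∧
      (∀ x ∈ l'.getLast?, ExpSym M x) ∧ (∀ a ∈ l'.dropLast, ¬ ExpSym M a) ∧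
      l'.length ≤ l.length := by
  intro l
  induction l with
  | nil => intro _ _ _ h; exact absurd rfl h
  | cons a t ih =>
    intro hAdm hA0 hlast _
    by_cases hEa : ExpSym M a
    · refine ⟨[a], List.isChain_singleton _,
        by intro x hx; rw [List.mem_singleton] at hx; subst hx; exact hA0 _ List.mem_cons_self,
        rfl, ?_, by simp, by simp⟩
      intro x hx
      simp only [List.getLast?_singleton, Option.mem_def, Option.some.injEq] at hx
      subst hx; exact hEa
    · cases t with
      | nil =>
        exfalso
        apply hEa
        apply hlast
        rfl
      | cons b t' =>
        unfold Adm at hAdm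
        unfold List.Chain' at hAdm
        rw [List.isChain_cons_cons] at hAdm
        obtain ⟨l'', hl''A, hl''0, hl''h, hl''l, hl''d, hl''len⟩ := ih hAdm.2
          (fun x hx => hA0 x (List.mem_cons_of_mem _ hx))
          (by intro x hx; apply hlast; rwa [List.getLast?_cons_cons])
          (List.cons_ne_nil _ _)
        have hl''ne : l'' ≠ [] := by
          intro hnil; rw [hnil] at hl''h; simp at hl''h
        have hlen'' : l''.length ≤ t'.length + 1 := by
          simpa only [List.length_cons] using hl''len
        refine ⟨a :: l'', ?_, ?_, rfl, ?_, ?_, by simp only [List.length_cons]; omega⟩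
        · unfold Adm
          unfold List.Chain'
          rw [List.isChain_cons]
          refine ⟨fun y hy => ?_, hl''A⟩
          rw [hl''h] at hy
          simp only [List.head?_cons, Option.mem_def, Option.some.injEq] at hy
          subst hy
          exact hAdm.1
        · intro x hx
          rcases List.mem_cons.mp hx with rfl | hx'
          · exact hA0 x (by simp)
          · exact hl''0 x hx'
        · intro x hx
          cases l'' with
          | nil => exact absurd rfl hl''ne
          | cons c t'' =>
            rw [List.getLast?_cons_cons] at hx
            exact hl''l x hx
        · intro x hx
          cases l'' with
          | nil => exact absurd rfl hl''ne
          | cons c t'' =>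
            have : (a :: c :: t'').dropLast = a :: (c :: t'').dropLast := rfl
            rw [this] at hx
            rcases List.mem_cons.mp hx with rfl | hx'
            · exact hEa
            · exact hl''d x hx'

def Plans (E : ℕ) (π : List M.A) : Prop :=
  π ≠ [] ∧ π.length ≤ E ∧ Adm M π ∧ (∀ a ∈ π, a ∈ M.A0) ∧
  (∀ x ∈ π.getLast?, ExpSym M x) ∧ (∀ a ∈ π.dropLast, ¬ ExpSym M a)

lemma mstep (E : ℕ) (hplan : ∀ b ∈ M.A0, ∃ π, Plans M E π ∧ π.head? = some b)
    (c : M.A) (y : ℝ) (π : List M.A) (hπ : Plans M E π) (hc : π.head? = some c)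
    (hy : y ∈ M.D c) :
    ∃ (c' : M.A) (π' : List M.A), Plans M E π' ∧ π'.head? = some c' ∧
      M.f c y ∈ M.D c' ∧ M.D0 c' ⊆ M.R0 c ∧
      ((π' = π.tail ∧ π.tail ≠ []) ∨ ExpSym M c) := by
  obtain ⟨hne, hlen, hAdm, hA0, hlast, hdrop⟩ := hπ
  have hcA0 : c ∈ M.A0 := hA0 c (List.mem_of_mem_head? hc)
  have hy' : M.f c y ∈ M.R c := (M.f_homeo c hcA0).2.mapsTo hy
  cases π with
  | nil => exact absurd rfl hne
  | cons c0 t =>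
    have hc0 : c0 = c := by
      simp only [List.head?_cons, Option.some.injEq] at hc; exact hc
    subst hc0
    cases t with
    | nil =>
      -- reset: current symbol is expanding
      have hEc : ExpSym M c0 := hlast c0 rfl
      obtain ⟨u, v, hu, hv, huv, hR, hR0⟩ := A0_ran M hcA0
      have hy'' : M.f c0 y ∈ Icc u v := by rwa [hR] at hy'
      obtain ⟨b', hb'0, hyD, _, hD0sub⟩ := branch_in M hu hv huv hy''
      obtain ⟨π', hπ', hπ'h⟩ := hplan b' hb'0
      exact ⟨b', π', hπ', hπ'h, hyD, by rw [hR0]; exact hD0sub, Or.inr hEc⟩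
    | cons b t' =>
      rw [show Adm M (c0 :: b :: t') = ((c0 :: b :: t').Chain' fun a b => M.D0 b ⊆ M.R0 a) from rfl,
        List.Chain', List.isChain_cons_cons] at hAdm
      have hrel : M.D0 b ⊆ M.R0 c0 := hAdm.1
      have hnexp : ¬ ExpSym M c0 := by
        apply hdrop
        show c0 ∈ (c0 :: b :: t').dropLast
        rw [show (c0 :: b :: t').dropLast = c0 :: (b :: t').dropLast from rfl]
        exact List.mem_cons_self
      have hbA0 : b ∈ M.A0 := hA0 b (by simp)
      have hDbR := (nonexp_succ M hcA0 hnexp hrel).2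
      refine ⟨b, b :: t', ?_, rfl, ?_, hrel, Or.inl ⟨rfl, List.cons_ne_nil _ _⟩⟩
      · refine ⟨List.cons_ne_nil _ _, by simp only [List.length_cons] at hlen ⊢; omega,
          hAdm.2, fun x hx => hA0 x (List.mem_cons_of_mem _ hx), ?_, ?_⟩
        · intro x hx
          apply hlast
          rwa [List.getLast?_cons_cons]
        · intro x hx
          apply hdrop
          rw [show (c0 :: b :: t').dropLast = c0 :: (b :: t').dropLast from rfl]
          exact List.mem_cons_of_mem _ hx
      · rw [hDbR]
        exact hy'

lemma machine (E : ℕ) (hplan : ∀ b ∈ M.A0, ∃ π, Plans M E π ∧ π.head? = some b)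
    (y0 : ℝ) (π0 : List M.A) (c0 : M.A) (h0 : Plans M E π0) (hc0 : π0.head? = some c0)
    (hy : y0 ∈ M.D c0) :
    ∃ (x : ℕ → ℝ) (as : ℕ → M.A), x 0 = y0 ∧ as 0 = c0 ∧
      (∀ k, as k ∈ M.A0) ∧ (∀ k, x k ∈ M.D (as k)) ∧
      (∀ k, x (k + 1) = M.f (as k) (x k)) ∧
      (∀ k, M.D0 (as (k + 1)) ⊆ M.R0 (as k)) ∧
      (∀ k, ∃ j, j ≤ E ∧ ExpSym M (as (k + j))) := by
  classical
  -- state: (current symbol, current point, current plan)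
  let St := M.A × ℝ × List M.A
  let Good : St → Prop := fun s => Plans M E s.2.2 ∧ s.2.2.head? = some s.1 ∧ s.2.1 ∈ M.D s.1
  let Rel : St → St → Prop := fun s s' =>
    s'.2.1 = M.f s.1 s.2.1 ∧ M.D0 s'.1 ⊆ M.R0 s.1 ∧
    ((s'.2.2 = s.2.2.tail ∧ s.2.2.tail ≠ []) ∨ ExpSym M s.1)
  have hstep : ∀ s : St, ∃ s' : St, Good s → (Good s' ∧ Rel s s') := by
    intro s
    by_cases hs : Good s
    · obtain ⟨c', π', hπ', hh', hmem', hsub', hdisj'⟩ :=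
        mstep M E hplan s.1 s.2.1 s.2.2 hs.1 hs.2.1 hs.2.2
      exact ⟨(c', M.f s.1 s.2.1, π'), fun _ => ⟨⟨hπ', hh', hmem'⟩, rfl, hsub', hdisj'⟩⟩
    · exact ⟨s, fun h => absurd h hs⟩
  choose F hF using hstep
  set s0 : St := (c0, y0, π0) with hs0
  set seq : ℕ → St := fun k => F^[k] s0 with hseq
  have hseqsucc : ∀ k, seq (k + 1) = F (seq k) := by
    intro k
    rw [hseq]
    exact Function.iterate_succ_apply' F k s0
  have hGood : ∀ k, Good (seq k) := by
    intro k
    induction k with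
    | zero => exact ⟨h0, hc0, hy⟩
    | succ k ihk =>
      rw [hseqsucc k]
      exact (hF (seq k) ihk).1
  have hRel : ∀ k, Rel (seq k) (seq (k + 1)) := by
    intro k
    rw [hseqsucc k]
    exact (hF (seq k) (hGood k)).2
  have gapclaim : ∀ m k, (seq k).2.2.length ≤ m →
      ∃ j, j < (seq k).2.2.length ∧ ExpSym M ((seq (k + j)).1) := by
    intro m
    induction m with
    | zero =>
      intro k hk
      exfalso
      have h1 := List.length_pos_iff.mpr (hGood k).1.1
      omega
    | succ m ihm =>
      intro k hk
      by_cases hE : ExpSym M ((seq k).1)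
      · exact ⟨0, List.length_pos_iff.mpr (hGood k).1.1, by simpa using hE⟩
      · rcases (hRel k).2.2 with ⟨htl, hne⟩ | hE'
        · have hlen1 : (seq (k + 1)).2.2.length = (seq k).2.2.length - 1 := by
            rw [htl]; exact List.length_tail
        
          have hlenpos : 0 < (seq k).2.2.length := List.length_pos_iff.mpr (hGood k).1.1
          obtain ⟨j, hjlt, hjE⟩ := ihm (k + 1) (by omega)
          refine ⟨j + 1, by omega, ?_⟩
          have : k + (j + 1) = (k + 1) + j := by omega
          rw [this]
          exact hjE
        · exact absurd hE' hE
  refine ⟨fun k => (seq k).2.1, fun k => (seq k).1, rfl, rfl, ?_, ?_, ?_, ?_, ?_⟩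
  · intro k
    exact (hGood k).1.2.2.2.1 _ (List.mem_of_mem_head? (hGood k).2.1)
  · intro k
    exact (hGood k).2.2
  · intro k
    exact (hRel k).1
  · intro k
    exact (hRel k).2.1
  · intro k
    obtain ⟨j, hjlt, hjE⟩ := gapclaim (seq k).2.2.length k (le_refl _)
    exact ⟨j, by have := (hGood k).1.2.1; omega, hjE⟩

end CCAux
namespace CCAux

open Set List

variable (M : MarkovMultiMap)

lemma tail_exists (E : ℕ) {C0 : Set M.A} (hA0C0 : M.A0 ⊆ C0)
    (hplans : ∀ b ∈ M.A0, ∃ π, Plans M E π ∧ π.head? = some b)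
    (zb : ℕ → M.A) (hzb : zb ∈ M.SFT) (hzbC : ∀ i, zb i ∈ C0) (kb : ℕ) :
    ∃ tail : ℕ → M.A, tail 0 = zb kb ∧
      (∀ t, M.D0 (tail (t + 1)) ⊆ M.R0 (tail t)) ∧
      (∀ t, tail t ∈ C0) ∧
      (∀ i, ∃ j, j ≤ E ∧ GoodSym M (tail (i + j))) := by
  classical
  have hnotA0good : ∀ i, zb i ∉ M.A0 → GoodSym M (zb i) := by
    intro i hi
    rcases M.A_cover (zb i) with h | h | h
    · exact absurd h hi
    · exact Or.inr (Or.inl h)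
    · exact Or.inr (Or.inr h)
  by_cases hA0ex : ∃ t, zb (kb + t) ∈ M.A0
  · set t0 := Nat.find hA0ex with ht0
    have hc : zb (kb + t0) ∈ M.A0 := Nat.find_spec hA0ex
    have hmin : ∀ t, t < t0 → zb (kb + t) ∉ M.A0 := fun t ht => Nat.find_min hA0ex ht
    set c := zb (kb + t0) with hc_def
    obtain ⟨π0, hπ0, hπ0h⟩ := hplans c hc
    obtain ⟨p, q, hp, hq, hpq, _, hD, _⟩ := A0_dom M hc
    have hy : (p : ℝ) ∈ M.D c := by rw [hD]; exact Set.left_mem_Icc.mpr hpq.le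
    obtain ⟨x, aM, _, haM0, haMA0, _, _, haMadj, haMgap⟩ :=
      machine M E hplans p π0 c hπ0 hπ0h hy
    refine ⟨fun t => if t < t0 then zb (kb + t) else aM (t - t0), ?_, ?_, ?_, ?_⟩
    · by_cases h0 : 0 < t0
      · simp only [if_pos h0, Nat.add_zero]
      · have ht00 : t0 = 0 := by omega
        simp only [if_neg h0, haM0, hc_def, ht00]
        simp
    · intro t
      by_cases h1 : t + 1 < t0
      · have h2 : t < t0 := by omega
        simp only [if_pos h1, if_pos h2]
        have := hzb (kb + t)
        have e : kb + (t + 1) = kb + t + 1 := by omega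
        rw [e]
        exact this
      · by_cases h2 : t < t0
        · -- t + 1 = t0
          have ht1 : t + 1 = t0 := by omega
          simp only [if_neg h1, if_pos h2]
          have e1 : t + 1 - t0 = 0 := by omega
          rw [e1, haM0]
          have := hzb (kb + t)
          have e : kb + t0 = kb + t + 1 := by omega
          rw [hc_def, e]
          exact this
        · have h3 : ¬ (t + 1 < t0) := by omega
          simp only [if_neg h3, if_neg h2]
          have e : t + 1 - t0 = (t - t0) + 1 := by omega
          rw [e]
          exact haMadj (t - t0)
    · intro t
      by_cases h : t < t0
      · simp only [if_pos h]; exact hzbC _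
      · simp only [if_neg h]; exact hA0C0 (haMA0 _)
    · intro i
      by_cases h : i < t0
      · refine ⟨0, Nat.zero_le _, ?_⟩
        simp only [Nat.add_zero]
        rw [if_pos h]
        exact hnotA0good _ (hmin i h)
      · obtain ⟨j, hj, hjE⟩ := haMgap (i - t0)
        refine ⟨j, hj, ?_⟩
        have h' : ¬ (i + j < t0) := by omega
        simp only [if_neg h']
        have e : i + j - t0 = (i - t0) + j := by omega
        rw [e]
        exact Or.inl hjE
  · push_neg at hA0ex
    refine ⟨fun t => zb (kb + t), by show zb (kb + 0) = zb kb; rw [Nat.add_zero], ?_,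
      fun t => hzbC _, ?_⟩
    · intro t
      show M.D0 (zb (kb + (t + 1))) ⊆ M.R0 (zb (kb + t))
      have := hzb (kb + t)
      have e : kb + (t + 1) = kb + t + 1 := by omega
      rw [e]
      exact this
    · intro i
      exact ⟨0, Nat.zero_le _, hnotA0good _ (hA0ex (i + 0))⟩

end CCAux
/-- If every `G(a)`, `a ∈ A₀`, is a straight line segment, some `a ∈ A₀` has
`R₀(a) ∩ P ≠ ∅`, and some irreducible component contains `A₀`, then `Σ_M`
satisfies the Coding Condition (CC). -/
theorem stmt17 (M : MarkovMultiMap) (hpp : M.ProperlyParametrized)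
    (hlin : ∀ a ∈ M.A0, ∃ c d : ℝ, ∀ x ∈ M.D a, M.f a x = c * x + d)
    (hexist : ∃ a ∈ M.A0, (M.R0 a ∩ (M.P : Set ℝ)).Nonempty)
    (hirr : ∃ C0 : Set M.A, M.IrreducibleComponent C0 ∧ M.A0 ⊆ C0) :
    M.CC := by
  classical
  haveI : Finite M.A := M.finA
  obtain ⟨C0, ⟨hC0irr, _hC0max⟩, hA0C0⟩ := hirr
  have hreach := CCAux.reach_exp M hexist hC0irr hA0C0
  have hplan0 : ∀ b : M.A, ∃ π : List M.A, b ∈ M.A0 →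
      (CCAux.Adm M π ∧ (∀ a ∈ π, a ∈ M.A0) ∧ π.head? = some b ∧
       (∀ x ∈ π.getLast?, CCAux.ExpSym M x) ∧ (∀ a ∈ π.dropLast, ¬ CCAux.ExpSym M a)) := by
    intro b
    by_cases hb : b ∈ M.A0
    · obtain ⟨l, hlA, hl0, hlh, hll⟩ := hreach b hb
      have hlne : l ≠ [] := by intro h; rw [h] at hlh; simp at hlh
      obtain ⟨l', h1, h2, h3, h4, h5, _⟩ := CCAux.trim M l hlA hl0 hll hlne
      exact ⟨l', fun _ => ⟨h1, h2, by rw [h3, hlh], h4, h5⟩⟩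
    · exact ⟨[], fun h => absurd h hb⟩
  choose plan hplanspec using hplan0
  obtain ⟨E0, hE0⟩ : ∃ E0 : ℕ, ∀ b : M.A, (plan b).length ≤ E0 := by
    have hfin : (Set.range fun b : M.A => (plan b).length).Finite := Set.finite_range _
    obtain ⟨E0, hE0⟩ := hfin.bddAbove
    exact ⟨E0, fun b => hE0 ⟨b, rfl⟩⟩
  set E := E0 + 1 with hE_def
  have hplans : ∀ b ∈ M.A0, ∃ π, CCAux.Plans M E π ∧ π.head? = some b := by
    intro b hb
    obtain ⟨h1, h2, h3, h4, h5⟩ := hplanspec b hb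
    refine ⟨plan b, ⟨?_, by have := hE0 b; omega, h1, h2, h4, h5⟩, h3⟩
    intro h; rw [h] at h3; simp at h3
  have hconn0 : ∀ pr : M.A × M.A, ∃ n : ℕ,
      (pr.1 ∈ C0 → pr.2 ∈ C0 → M.WordFromTo C0 pr.1 pr.2 n) := by
    intro pr
    by_cases h1 : pr.1 ∈ C0
    · by_cases h2 : pr.2 ∈ C0
      · obtain ⟨n, hn⟩ := hC0irr pr.1 h1 pr.2 h2
        exact ⟨n, fun _ _ => hn⟩
      · exact ⟨0, fun _ hh => absurd hh h2⟩
    · exact ⟨0, fun hh => absurd hh h1⟩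
  choose nconn hconn using hconn0
  obtain ⟨W, hW⟩ : ∃ W : ℕ, ∀ pr : M.A × M.A, nconn pr ≤ W := by
    have hfin : (Set.range nconn).Finite := Set.finite_range _
    obtain ⟨W, hW⟩ := hfin.bddAbove
    exact ⟨W, fun pr => hW ⟨pr, rfl⟩⟩
  set N := W + E + 2 with hN_def
  set Z : Set (ℕ → M.A) :=
    {z | z ∈ M.SFT ∧ (∀ i, z i ∈ C0) ∧
      ∀ i, ∃ j, j < N ∧ CCAux.GoodSym M (z (i + j))} with hZ_def
  refine ⟨Z, ⟨fun z hz => hz.1, ?_, ?_⟩, ?_, ?_, ?_⟩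
  · -- shift invariance
    intro z hz
    refine ⟨fun n => hz.1 (n + 1), fun i => hz.2.1 (i + 1), fun i => ?_⟩
    obtain ⟨j, hj, hg⟩ := hz.2.2 (i + 1)
    refine ⟨j, hj, ?_⟩
    show CCAux.GoodSym M (z (i + j + 1))
    rw [show i + j + 1 = i + 1 + j from by omega]
    exact hg
  · -- closedness
    intro x hx
    refine ⟨fun n => ?_, fun i => ?_, fun i => ?_⟩
    · obtain ⟨z, hzZ, hag⟩ := hx (n + 2)
      have e1 : z n = x n := hag n (by omega)
      have e2 : z (n + 1) = x (n + 1) := hag (n + 1) (by omega)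
      rw [← e1, ← e2]
      exact hzZ.1 n
    · obtain ⟨z, hzZ, hag⟩ := hx (i + 1)
      rw [← hag i (by omega)]
      exact hzZ.2.1 i
    · obtain ⟨z, hzZ, hag⟩ := hx (i + N + 1)
      obtain ⟨j, hj, hg⟩ := hzZ.2.2 i
      exact ⟨j, hj, by rw [← hag (i + j) (by omega)]; exact hg⟩
  · -- transitivity on symbols
    intro a b hsa hsb
    obtain ⟨za, hza, ka, hka⟩ := hsa
    obtain ⟨zb, hzb, kb, hkb⟩ := hsb
    have haC0 : a ∈ C0 := hka ▸ hza.2.1 ka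
    have hbC0 : b ∈ C0 := hkb ▸ hzb.2.1 kb
    obtain ⟨tail, htail0, htailadj, htailC, htailgap⟩ :=
      CCAux.tail_exists M E hA0C0 hplans zb hzb.1 hzb.2.1 kb
    rw [hkb] at htail0
    set nab := nconn (a, b) with hnab
    obtain ⟨w, ⟨hwLang, hwC0⟩, hw0, hwlast⟩ := hconn (a, b) haC0 hbC0
    have hwadj := CCAux.word_adjacent M hwLang
    have hwlast' : ∀ h : nab < nab + 1, w ⟨nab, h⟩ = b := by
      intro h
      rw [show (⟨nab, h⟩ : Fin (nab + 1)) = Fin.last nab from Fin.ext rfl, hwlast]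
    set zc : ℕ → M.A := fun t => if h : t < nab then w ⟨t, by omega⟩ else tail (t - nab)
      with hzc
    have hzcval1 : ∀ t (h : t < nab), zc t = w ⟨t, by omega⟩ := fun t h => dif_pos h
    have hzcval2 : ∀ t, nab ≤ t → zc t = tail (t - nab) := fun t h => dif_neg (by omega)
    have hzc_at : ∀ t (h : t ≤ nab), zc t = w ⟨t, by omega⟩ := by
      intro t h
      rcases lt_or_eq_of_le h with h' | h'
      · exact hzcval1 t h'
      · rw [hzcval2 t (le_of_eq h'.symm), show t - nab = 0 from by omega, htail0,
          show (⟨t, by omega⟩ : Fin (nab + 1)) = Fin.last nab from Fin.ext h', hwlast]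
    have hzcZ : zc ∈ Z := by
      refine ⟨fun t => ?_, fun t => ?_, fun i => ?_⟩
      · -- SFT adjacency
        by_cases h1 : t + 1 ≤ nab
        · rw [hzc_at t (by omega), hzc_at (t + 1) h1]
          exact hwadj t (by omega)
        · rw [hzcval2 t (by omega), hzcval2 (t + 1) (by omega)]
          rw [show t + 1 - nab = (t - nab) + 1 from by omega]
          exact htailadj (t - nab)
      · by_cases h : t < nab
        · rw [hzcval1 t h]; exact hwC0 _
        · rw [hzcval2 t (by omega)]; exact htailC _
      · by_cases hi : nab ≤ i
        · obtain ⟨j, hjE, hg⟩ := htailgap (i - nab)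
          refine ⟨j, by omega, ?_⟩
          rw [hzcval2 (i + j) (by omega),
            show i + j - nab = (i - nab) + j from by omega]
          exact hg
        · obtain ⟨j0, hj0E, hg0⟩ := htailgap 0
          have hnabW : nab ≤ W := hW (a, b)
          refine ⟨nab - i + j0, by omega, ?_⟩
          rw [show i + (nab - i + j0) = nab + j0 from by omega,
            hzcval2 (nab + j0) (by omega),
            show nab + j0 - nab = 0 + j0 from by omega]
          exact hg0
    refine ⟨zc, hzcZ, 0, nab, ?_, ?_⟩
    · rw [hzc_at 0 (by omega)]
      rw [show (⟨0, by omega⟩ : Fin (nab + 1)) = 0 from Fin.ext rfl]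
      exact hw0
    · rw [Nat.zero_add, hzcval2 nab (le_refl _), Nat.sub_self, htail0]
  · -- coverage
    intro y hy
    obtain ⟨b0, hb00, hyD, _, _⟩ := CCAux.branch_in M M.P_zero M.P_one one_pos hy
    obtain ⟨π0, hπ0, hπ0h⟩ := hplans b0 hb00
    obtain ⟨x, as, hx0, _, hasA0, hxD, hxf, hasadj, hasgap⟩ :=
      CCAux.machine M E hplans y π0 b0 hπ0 hπ0h hyD
    have hGr : ∀ i, (x i, x (i + 1)) ∈ M.Gr (as i) := by
      intro i
      rw [M.Gr_A0 (as i) (hasA0 i)]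
      exact ⟨hxD i, hxf i⟩
    refine ⟨as, ⟨fun n => hasadj n, fun i => hA0C0 (hasA0 i), fun i => ?_⟩,
      x, ⟨fun k => CCAux.D_subset_01 M (as k) (hxD k), fun k => ?_⟩, hx0, hGr⟩
    · obtain ⟨j, hjE, hjExp⟩ := hasgap i
      exact ⟨j, by omega, Or.inl hjExp⟩
    · exact Set.mem_iUnion.mpr ⟨as k, hGr k⟩
  · -- shrinking of the intervals I_u
    intro ε hε
    have hδpos := CCAux.delta_pos M
    have hδle := CCAux.delta_le_one M
    obtain ⟨k0, hk0⟩ := exists_pow_lt_of_lt_one hε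
      (by linarith : 1 - CCAux.delta M < 1)
    refine ⟨(k0 + 1) * N, ?_⟩
    intro n hn u hu
    obtain ⟨z, hzZ, m, hzm⟩ := hu
    set l := List.ofFn u with hl
    have hlen : l.length = n + 1 := by rw [hl, List.length_ofFn]
    have hlne : l ≠ [] := by intro h; rw [h] at hlen; simp at hlen
    have hNpos : 0 < N := by omega
    have huLang : u ∈ M.Lang (n + 1) := ⟨z, hzZ.1, m, hzm⟩
    have huadj := CCAux.word_adjacent M huLang
    have hchain : l.Chain' (fun a b => M.D0 b ⊆ M.R0 a) := by
      rw [hl]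
      unfold List.Chain'
      rw [List.isChain_iff_getElem]
      intro i hi
      rw [List.length_ofFn] at hi
      have hi' : i < n := by omega
      have e1 : (List.ofFn u).get ⟨i, by rw [List.length_ofFn]; omega⟩
          = u ⟨i, by omega⟩ := by
        rw [List.get_eq_getElem, List.getElem_ofFn]
      have e2 : (List.ofFn u).get ⟨i + 1, by rw [List.length_ofFn]; omega⟩
          = u ⟨i + 1, by omega⟩ := by
        rw [List.get_eq_getElem, List.getElem_ofFn]
      simp only [List.getElem_ofFn]
      exact huadj i hi'
    obtain ⟨α, β, p, q, hαβ, hp, hq, hpq, _, himg, _, hbound, h12⟩ :=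
      CCAux.key_bound M hlin l hchain hlne
    have hlast : l.getLast? = some (u (Fin.last n)) := by
      rw [List.getLast?_eq_getElem?, hlen,
        show n + 1 - 1 = n from rfl,
        List.getElem?_eq_getElem (by rw [hlen]; omega)]
      congr 1
      simp only [hl, List.getElem_ofFn]
      exact congrArg u (Fin.ext rfl)
    have hIeq : M.Iword u = Icc α β := by
      have h0 : M.Iword u = gWordList M l '' M.R (u (Fin.last n)) := by
        rw [hl]; rfl
      rw [h0]
      exact himg _ hlast
    rw [hIeq]
    have hlenI : intervalLen (Icc α β) = β - α := by
      rw [intervalLen, csSup_Icc hαβ, csInf_Icc hαβ]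
    rw [hlenI]
    by_cases hA12 : ∃ i : Fin (n + 1), u i ∈ M.A1 ∪ M.A2
    · obtain ⟨i, hi⟩ := hA12
      have hβα : β = α := h12 ⟨u i, by rw [hl]; exact List.mem_ofFn.mpr ⟨i, rfl⟩, hi⟩
      rw [hβα]
      simpa using hε
    · push_neg at hA12
      have hwin : ∀ i : ℕ, ∃ j, j < N ∧ CCAux.GoodSym M (z (i + j)) := hzZ.2.2
      choose jj hjj1 hjj2 using hwin
      set φ : ℕ → ℕ := fun w =>
        Nat.rec (motive := fun _ => ℕ) (jj m)
          (fun _ prev => prev + 1 + jj (m + prev + 1)) w with hφ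
      have hφ0 : φ 0 = jj m := rfl
      have hφs : ∀ w, φ (w + 1) = φ w + 1 + jj (m + φ w + 1) := fun w => rfl
      have hφmono : StrictMono φ := strictMono_nat_of_lt_succ (fun w => by rw [hφs]; omega)
      have hφgood : ∀ w, CCAux.GoodSym M (z (m + φ w)) := by
        intro w
        cases w with
        | zero => rw [hφ0]; exact hjj2 m
        | succ w =>
          rw [hφs]
          have hgg := hjj2 (m + φ w + 1)
          rwa [show (m + φ w + 1) + jj (m + φ w + 1)
            = m + (φ w + 1 + jj (m + φ w + 1)) from by omega] at hgg
      have hφbound : ∀ w, φ w < (w + 1) * N := by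
        intro w
        induction w with
        | zero => rw [hφ0, Nat.one_mul]; exact hjj1 m
        | succ w ihw =>
          rw [hφs]
          have h1 : jj (m + φ w + 1) < N := hjj1 _
          have h2 : (w + 1 + 1) * N = (w + 1) * N + N := by rw [Nat.succ_mul]
          set A := (w + 1) * N with hA
          set B := (w + 1 + 1) * N with hB
          omega
      have hk0n : ∀ w, w < k0 → φ w < n := by
        intro w hw
        have h1 := hφbound w
        have h2 : (w + 1) * N ≤ k0 * N := Nat.mul_le_mul_right N (by omega)
        have h3 : k0 * N ≤ (k0 + 1) * N := Nat.mul_le_mul_right N (by omega)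
        have h4 : (k0 + 1) * N ≤ n := hn
        set A := (w + 1) * N with hA
        set A2 := k0 * N with hA2
        set A3 := (k0 + 1) * N with hA3
        omega
      have hcount : k0 ≤ CCAux.eCnt M l := by
        apply CCAux.eCnt_ge M l k0 φ hφmono
        intro w hw
        have hφn : φ w < n := hk0n w hw
        refine ⟨by rw [hlen]; omega, ?_⟩
        have hget : l.get ⟨φ w, by rw [hlen]; omega⟩ = u ⟨φ w, by omega⟩ := by
          rw [List.get_eq_getElem]
          simp only [hl, List.getElem_ofFn]
        rw [hget]
        have hzg := hφgood w
        have hzu : z (m + φ w) = u ⟨φ w, by omega⟩ := (hzm ⟨φ w, by omega⟩).symm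
        rw [hzu] at hzg
        rcases hzg with h | h | h
        · exact h
        · exact absurd (Set.mem_union_left _ h) (hA12 _)
        · exact absurd (Set.mem_union_right _ h) (hA12 _)
      have hqp1 : q - p ≤ 1 := by
        have h1 := CCAux.memP01 M hp
        have h2 := CCAux.memP01 M hq
        linarith [h1.1, h2.2]
      have hXnn : (0:ℝ) ≤ 1 - CCAux.delta M := by linarith
      have hpow : (1 - CCAux.delta M) ^ (CCAux.eCnt M l) ≤ (1 - CCAux.delta M) ^ k0 :=
        pow_le_pow_of_le_one hXnn (by linarith) hcount
      have hpownn : (0:ℝ) ≤ (1 - CCAux.delta M) ^ (CCAux.eCnt M l) := pow_nonneg hXnn _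
      nlinarith [hbound, hk0, hpow, hpownn, hqp1, hpq]
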